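/- Fix n ≥ 1 and let W be the group of signed permutation matrices acting on ℝⁿ (matrices with entries in {−1,0,1}, one nonzero per row and column). For x, y ∈ ℝⁿ with y nonnegative, x lies in the convex hull of the orbit {A y : A ∈ W} if and only if |x| is weakly sub-majorized by y. -/

import Mathlib

open Finset

/-- `u` is weakly sub-majorized by `v`. -/
def WeakSubMaj {α β : Type*} [Fintype α] [Fintype β] (u : α → ℝ) (v : β → ℝ) : Prop :=
  ∀ S : Finset α, ∃ T : Finset β, T.card = S.card ∧ ∑ i ∈ S, u i ≤ ∑ j ∈ T, v j

/-- A signed permutation matrix: entries in `{-1, 0, 1}` with exactly one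
nonzero entry in each row and in each column. -/
def IsSignedPermMatrix {n : ℕ} (M : Matrix (Fin n) (Fin n) ℝ) : Prop :=
  (∀ i j, M i j = -1 ∨ M i j = 0 ∨ M i j = 1) ∧
  (∀ i, ∃! j, M i j ≠ 0) ∧
  (∀ j, ∃! i, M i j ≠ 0)


private lemma chain_le (a : ℕ → ℝ) (m : ℕ) (ha : ∀ k, k + 1 < m → a (k + 1) ≤ a k) :
    ∀ j k, j ≤ k → k < m → a k ≤ a j := by
  intro j k hjk
  induction hjk with
  | refl => intro _; exact le_rfl
  | @step k' h ih =>
    intro hkm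
    exact (ha k' hkm).trans (ih (Nat.lt_of_succ_lt hkm))

private lemma abel_ineq : ∀ (m : ℕ) (a b d : ℕ → ℝ),
    (∀ k, k + 1 < m → a (k + 1) ≤ a k) → (∀ k, k < m → 0 ≤ a k) →
    (∀ k, k ≤ m → ∑ i ∈ range k, b i ≤ ∑ i ∈ range k, d i) →
    ∑ i ∈ range m, a i * b i ≤ ∑ i ∈ range m, a i * d i := by
  intro m
  induction m with
  | zero => simp
  | succ m ih =>
    intro a b d ha ha0 hbd
    have key : ∀ e : ℕ → ℝ, ∑ i ∈ range (m + 1), a i * e i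
        = (∑ i ∈ range m, (a i - a m) * e i) + a m * ∑ i ∈ range (m + 1), e i := by
      intro e
      rw [Finset.mul_sum, Finset.sum_range_succ (fun i => a m * e i),
        ← add_assoc, ← Finset.sum_add_distrib, Finset.sum_range_succ (fun i => a i * e i)]
      congr 1
      exact Finset.sum_congr rfl fun i _ => by ring
    have h1 : ∑ i ∈ range m, (a i - a m) * b i ≤ ∑ i ∈ range m, (a i - a m) * d i := by
      apply ih
      · intro k hk
        have := ha k (by omega); linarith
      · intro k hk
        have := chain_le a (m + 1) ha k m (le_of_lt hk) (Nat.lt_succ_self m)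
        linarith
      · intro k hk; exact hbd k (by omega)
    have h2 : a m * ∑ i ∈ range (m + 1), b i ≤ a m * ∑ i ∈ range (m + 1), d i :=
      mul_le_mul_of_nonneg_left (hbd (m + 1) le_rfl) (ha0 m (by omega))
    rw [key b, key d]; linarith

private lemma sum_le_sum_of_sdiff_le {n : ℕ} (y : Fin n → ℝ) (T T' : Finset (Fin n))
    (hcard : T.card = T'.card)
    (hle : ∀ a ∈ T \ T', ∀ b ∈ T' \ T, y a ≤ y b) :
    ∑ t ∈ T, y t ≤ ∑ t ∈ T', y t := by
  classical
  rw [← Finset.sum_inter_add_sum_sdiff T T' y, ← Finset.sum_inter_add_sum_sdiff T' T y,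
    Finset.inter_comm T' T]
  have hc : (T \ T').card = (T' \ T).card := Finset.card_sdiff_comm hcard
  have e := Finset.equivOfCardEq hc
  have hkey : ∑ a ∈ T \ T', y a ≤ ∑ b ∈ T' \ T, y b := by
    rw [← Finset.sum_coe_sort (T \ T') y, ← Finset.sum_coe_sort (T' \ T) y,
      ← Equiv.sum_comp e (fun b => y b.1)]
    exact Finset.sum_le_sum fun a _ => hle a.1 a.2 (e a).1 (e a).2
  linarith


private lemma IsSignedPermMatrix.exists_perm {n : ℕ} {A : Matrix (Fin n) (Fin n) ℝ}
    (hA : IsSignedPermMatrix A) :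
    ∃ σ : Equiv.Perm (Fin n), (∀ i, A i (σ i) = 1 ∨ A i (σ i) = -1) ∧
      ∀ v : Fin n → ℝ, A.mulVec v = fun i => A i (σ i) * v (σ i) := by
  classical
  obtain ⟨hent, hrow, hcol⟩ := hA
  choose g hg hg' using hrow
  have hinj : Function.Injective g := by
    intro i1 i2 hgi
    obtain ⟨j0, hj0, hj0'⟩ := hcol (g i1)
    have e1 := hj0' i1 (hg i1)
    have e2 := hj0' i2 (by rw [hgi]; exact hg i2)
    rw [e1, e2]
  let σ : Equiv.Perm (Fin n) := Equiv.ofBijective g (Finite.injective_iff_bijective.mp hinj)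
  have hσ : ∀ i, σ i = g i := fun i => rfl
  refine ⟨σ, fun i => ?_, fun v => ?_⟩
  · rw [hσ]
    rcases hent i (g i) with h | h | h
    · exact Or.inr h
    · exact absurd h (hg i)
    · exact Or.inl h
  · funext i
    rw [hσ]
    show ∑ j, A i j * v j = A i (g i) * v (g i)
    apply Finset.sum_eq_single
    · intro b _ hb
      have : A i b = 0 := by
        by_contra hb'
        exact hb (hg' i b hb')
      rw [this, zero_mul]
    · intro habs; exact absurd (Finset.mem_univ _) habs

private lemma isSignedPermMatrix_mk {n : ℕ} (σ : Equiv.Perm (Fin n)) (ε : Fin n → ℝ)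
    (hε : ∀ i, ε i = 1 ∨ ε i = -1) :
    IsSignedPermMatrix (fun i j => if j = σ i then ε i else 0) ∧
      ∀ v : Fin n → ℝ, Matrix.mulVec (fun i j => if j = σ i then ε i else 0) v
        = fun i => ε i * v (σ i) := by
  classical
  have hε0 : ∀ i, ε i ≠ 0 := by
    intro i; rcases hε i with h | h <;> rw [h] <;> norm_num
  constructor
  · refine ⟨fun i j => ?_, fun i => ⟨σ i, ?_, fun j hj => ?_⟩, fun j => ⟨σ.symm j, ?_, fun i hi => ?_⟩⟩
    · by_cases hj : j = σ i
      · rcases hε i with h | h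
        · right; right; simp [hj, h]
        · left; simp [hj, h]
      · right; left; simp [hj]
    · simp [hε0 i]
    · by_contra hne
      simp only [if_neg hne] at hj
      exact hj rfl
    · simp [Equiv.apply_symm_apply, hε0]
    · simp only [ne_eq, ite_eq_right_iff, not_forall] at hi
      obtain ⟨hji, -⟩ := hi
      rw [hji, Equiv.symm_apply_apply]
  · intro v
    funext i
    show ∑ j, (if j = σ i then ε i else 0) * v j = ε i * v (σ i)
    rw [Finset.sum_eq_single (σ i)]
    · simp
    · intro b _ hb; simp [hb]
    · intro habs; exact absurd (Finset.mem_univ _) habs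

private def topSet {n : ℕ} (ρ : Equiv.Perm (Fin n)) (k : ℕ) (hk : k ≤ n) : Finset (Fin n) :=
  Finset.image (fun i : Fin k => ρ (Fin.castLE hk i)) Finset.univ

private lemma topSet_inj {n : ℕ} (ρ : Equiv.Perm (Fin n)) {k : ℕ} (hk : k ≤ n) :
    Function.Injective (fun i : Fin k => ρ (Fin.castLE hk i)) :=
  ρ.injective.comp (Fin.castLE_injective hk)

private lemma card_topSet {n : ℕ} (ρ : Equiv.Perm (Fin n)) {k : ℕ} (hk : k ≤ n) :
    (topSet ρ k hk).card = k := by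
  rw [topSet, Finset.card_image_of_injective _ (topSet_inj ρ hk), Finset.card_univ,
    Fintype.card_fin]

private lemma mem_topSet_iff {n : ℕ} (ρ : Equiv.Perm (Fin n)) {k : ℕ} (hk : k ≤ n)
    (a : Fin n) : a ∈ topSet ρ k hk ↔ ((ρ.symm a : Fin n) : ℕ) < k := by
  constructor
  · rintro ha
    rw [topSet, Finset.mem_image] at ha
    obtain ⟨i, -, rfl⟩ := ha
    simp only [Equiv.symm_apply_apply]
    exact i.2
  · intro hlt
    rw [topSet, Finset.mem_image]
    exact ⟨⟨(ρ.symm a : ℕ), hlt⟩, Finset.mem_univ _, by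
      have : Fin.castLE hk ⟨((ρ.symm a : Fin n) : ℕ), hlt⟩ = ρ.symm a := by
        apply Fin.ext; rfl
      rw [this, Equiv.apply_symm_apply]⟩

private lemma sum_topSet {n : ℕ} (ρ : Equiv.Perm (Fin n)) {k : ℕ} (hk : k ≤ n)
    (f : Fin n → ℝ) :
    ∑ t ∈ topSet ρ k hk, f t
      = ∑ i ∈ range k, (if h : i < n then f (ρ ⟨i, h⟩) else 0) := by
  rw [topSet, Finset.sum_image (fun a _ b _ h => topSet_inj ρ hk h),
    ← Fin.sum_univ_eq_sum_range (fun i => if h : i < n then f (ρ ⟨i, h⟩) else 0) k]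
  apply Finset.sum_congr rfl
  intro i _
  have h1 : (i : ℕ) < n := lt_of_lt_of_le i.2 hk
  rw [dif_pos h1]
  rfl

private lemma topSet_max {n : ℕ} (y : Fin n → ℝ) (ρ : Equiv.Perm (Fin n))
    (hρ : ∀ i j : Fin n, i ≤ j → y (ρ j) ≤ y (ρ i)) {k : ℕ} (hk : k ≤ n)
    (T : Finset (Fin n)) (hT : T.card = k) :
    ∑ t ∈ T, y t ≤ ∑ t ∈ topSet ρ k hk, y t := by
  apply sum_le_sum_of_sdiff_le y T _ (by rw [hT, card_topSet])
  intro a ha b hb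
  rw [Finset.mem_sdiff] at ha hb
  have ha' : ¬ ((ρ.symm a : ℕ) < k) := fun hlt => ha.2 ((mem_topSet_iff ρ hk a).mpr hlt)
  have hb' : ((ρ.symm b : ℕ) < k) := (mem_topSet_iff ρ hk b).mp hb.1
  have hle : ρ.symm b ≤ ρ.symm a := by
    rw [Fin.le_def]; omega
  have := hρ _ _ hle
  simpa using this

/-- `W`-majorization for the hyperoctahedral group coincides with weak
sub-majorization of absolute values: for nonnegative `y`, `x` is in the convex
hull of the orbit of `y` under signed permutation matrices iff `|x| ≼_w y`. -/
theorem mem_convexHull_signedPerm_orbit_iff_weakSubMaj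
    (n : ℕ) (x y : Fin n → ℝ) (hy : ∀ i, 0 ≤ y i) :
    x ∈ convexHull ℝ {z : Fin n → ℝ |
        ∃ A : Matrix (Fin n) (Fin n) ℝ, IsSignedPermMatrix A ∧ z = A.mulVec y} ↔
      WeakSubMaj (fun i => |x i|) y := by
  classical
  set Orb : Set (Fin n → ℝ) := {z : Fin n → ℝ |
      ∃ A : Matrix (Fin n) (Fin n) ℝ, IsSignedPermMatrix A ∧ z = A.mulVec y} with hOrbDef
  have cardle : ∀ S : Finset (Fin n), S.card ≤ n := fun S => by
    simpa using Finset.card_le_univ S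
  -- sorting permutation for y (decreasing)
  set ρ : Equiv.Perm (Fin n) := Tuple.sort (fun i => -y i) with hρdef
  have hρ : ∀ i j : Fin n, i ≤ j → y (ρ j) ≤ y (ρ i) := by
    intro i j hij
    have := Tuple.monotone_sort (fun i => -y i) hij
    simp only [Function.comp_apply] at this
    rw [hρdef]; linarith
  constructor
  · -- forward
    intro hx
    set C : Set (Fin n → ℝ) :=
      {w | ∀ S : Finset (Fin n), ∑ i ∈ S, |w i| ≤ ∑ t ∈ topSet ρ S.card (cardle S), y t}
      with hCdef
    have hC : Convex ℝ C := by
      intro w1 h1 w2 h2 a b ha hb hab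
      intro S
      calc ∑ i ∈ S, |(a • w1 + b • w2) i|
          ≤ ∑ i ∈ S, (a * |w1 i| + b * |w2 i|) := by
            apply Finset.sum_le_sum
            intro i _
            simp only [Pi.add_apply, Pi.smul_apply, smul_eq_mul]
            calc |a * w1 i + b * w2 i| ≤ |a * w1 i| + |b * w2 i| := abs_add_le _ _
              _ = a * |w1 i| + b * |w2 i| := by
                  rw [abs_mul, abs_mul, abs_of_nonneg ha, abs_of_nonneg hb]
        _ = a * ∑ i ∈ S, |w1 i| + b * ∑ i ∈ S, |w2 i| := by
            rw [Finset.sum_add_distrib, Finset.mul_sum, Finset.mul_sum]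
        _ ≤ a * ∑ t ∈ topSet ρ S.card (cardle S), y t
            + b * ∑ t ∈ topSet ρ S.card (cardle S), y t :=
            add_le_add (mul_le_mul_of_nonneg_left (h1 S) ha)
              (mul_le_mul_of_nonneg_left (h2 S) hb)
        _ = ∑ t ∈ topSet ρ S.card (cardle S), y t := by rw [← add_mul, hab, one_mul]
    have hOC : Orb ⊆ C := by
      rintro z ⟨A, hA, rfl⟩ S
      obtain ⟨σ, hσ1, hσ2⟩ := hA.exists_perm
      rw [hσ2 y]
      have habs : ∑ i ∈ S, |A i (σ i) * y (σ i)| = ∑ i ∈ S, y (σ i) := by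
        apply Finset.sum_congr rfl
        intro i _
        rcases hσ1 i with h | h <;> rw [abs_mul, h] <;>
          simp [abs_of_nonneg (hy (σ i))]
      have himg : ∑ i ∈ S, y (σ i) = ∑ t ∈ Finset.image (fun i => σ i) S, y t :=
        (Finset.sum_image (fun a _ b _ hab => σ.injective hab)).symm
      rw [habs, himg]
      have hcard : (S.image fun i => σ i).card = S.card :=
        Finset.card_image_of_injective _ σ.injective
      exact topSet_max y ρ hρ (cardle S) _ hcard
    have hxC : x ∈ C := convexHull_min hOC hC hx
    intro S
    refine ⟨topSet ρ S.card (cardle S), by rw [card_topSet], ?_⟩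
    exact hxC S
  · -- reverse
    intro h
    by_contra hx
    have hfin : Orb.Finite := by
      apply Set.Finite.subset (Set.finite_range
        (fun p : Equiv.Perm (Fin n) × (Fin n → Bool) =>
          fun i => (if p.2 i then (1 : ℝ) else -1) * y (p.1 i)))
      rintro z ⟨A, hA, rfl⟩
      obtain ⟨σ, hσ1, hσ2⟩ := hA.exists_perm
      refine ⟨(σ, fun i => decide (A i (σ i) = 1)), ?_⟩
      rw [hσ2 y]
      funext i
      rcases hσ1 i with h1 | h1 <;> norm_num [h1]
    have hclosed : IsClosed (convexHull ℝ Orb) := hfin.isClosed_convexHull (𝕜 := ℝ)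
    obtain ⟨f, u, hfu, hux⟩ :=
      geometric_hahn_banach_closed_point (convex_convexHull ℝ Orb) hclosed hx
    set c : Fin n → ℝ := fun i => f (Pi.single i 1) with hcdef
    have hf : ∀ z : Fin n → ℝ, f z = ∑ i, z i * c i := by
      intro z
      have hz : z = ∑ i, Pi.single i (z i) := (Finset.univ_sum_single z).symm
      conv_lhs => rw [hz]
      rw [map_sum]
      apply Finset.sum_congr rfl
      intro i _
      have hsingle : Pi.single i (z i) = (z i) • (Pi.single i (1 : ℝ) : Fin n → ℝ) := by
        funext j
        by_cases hji : j = i <;> simp [Pi.single_apply, hji]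
      rw [hsingle, map_smul, hcdef, smul_eq_mul]
    set τ : Equiv.Perm (Fin n) := Tuple.sort (fun i => -|c i|) with hτdef
    have hτ : ∀ i j : Fin n, i ≤ j → |c (τ j)| ≤ |c (τ i)| := by
      intro i j hij
      have := Tuple.monotone_sort (fun i => -|c i|) hij
      simp only [Function.comp_apply] at this
      rw [hτdef]; linarith
    set afun : ℕ → ℝ := fun k => if hkn : k < n then |c (τ ⟨k, hkn⟩)| else 0 with hadef
    set bfun : ℕ → ℝ := fun k => if hkn : k < n then |x (τ ⟨k, hkn⟩)| else 0 with hbdef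
    set dfun : ℕ → ℝ := fun k => if hkn : k < n then y (ρ ⟨k, hkn⟩) else 0 with hddef
    have hps : ∀ k, k ≤ n → ∑ i ∈ Finset.range k, bfun i ≤ ∑ i ∈ Finset.range k, dfun i := by
      intro k hk
      rw [hbdef, hddef, ← sum_topSet τ hk (fun i => |x i|), ← sum_topSet ρ hk y]
      obtain ⟨T, hT1, hT2⟩ := h (topSet τ k hk)
      refine le_trans hT2 (topSet_max y ρ hρ hk T ?_)
      rw [hT1, card_topSet]
    have habel := abel_ineq n afun bfun dfun
      (fun k hk => by
        simp only [hadef]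
        rw [dif_pos hk, dif_pos (Nat.lt_of_succ_lt hk)]
        exact hτ ⟨k, Nat.lt_of_succ_lt hk⟩ ⟨k + 1, hk⟩ (by simp [Fin.le_def]))
      (fun k hk => by simp only [hadef]; rw [dif_pos hk]; exact abs_nonneg _)
      hps
    have hL : ∑ i ∈ Finset.range n, afun i * bfun i = ∑ i : Fin n, |c i| * |x i| := by
      rw [← Fin.sum_univ_eq_sum_range (fun k => afun k * bfun k) n,
        ← Equiv.sum_comp τ (fun i => |c i| * |x i|)]
      apply Finset.sum_congr rfl
      intro i _
      simp only [hadef, hbdef, dif_pos i.2, Fin.eta]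
    have hR : ∑ i ∈ Finset.range n, afun i * dfun i
        = ∑ i : Fin n, |c (τ i)| * y (ρ i) := by
      rw [← Fin.sum_univ_eq_sum_range (fun k => afun k * dfun k) n]
      apply Finset.sum_congr rfl
      intro i _
      simp only [hadef, hddef, dif_pos i.2, Fin.eta]
    have h1 : f x ≤ ∑ i : Fin n, |c i| * |x i| := by
      rw [hf x]
      apply Finset.sum_le_sum
      intro i _
      calc x i * c i ≤ |x i * c i| := le_abs_self _
        _ = |c i| * |x i| := by rw [abs_mul, mul_comm]
    set ε : Fin n → ℝ := fun i => if 0 ≤ c i then 1 else -1 with hεdef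
    have hε : ∀ i, ε i = 1 ∨ ε i = -1 := by
      intro i
      by_cases h0 : 0 ≤ c i
      · left; simp [hεdef, h0]
      · right; simp [hεdef, h0]
    set σ : Equiv.Perm (Fin n) := τ.symm.trans ρ with hσdef
    obtain ⟨hAsp, hAmul⟩ := isSignedPermMatrix_mk σ ε hε
    have hz : (fun i => ε i * y (σ i)) ∈ Orb := ⟨_, hAsp, (hAmul y).symm⟩
    have h2 : ∑ i : Fin n, |c (τ i)| * y (ρ i) = f (fun i => ε i * y (σ i)) := by
      rw [hf, ← Equiv.sum_comp τ (fun i => ε i * y (σ i) * c i)]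
      apply Finset.sum_congr rfl
      intro i _
      have hστ : σ (τ i) = ρ i := by simp [hσdef]
      have hεc : ε (τ i) * c (τ i) = |c (τ i)| := by
        by_cases h0 : 0 ≤ c (τ i)
        · rw [hεdef]; simp only [if_pos h0, one_mul]; rw [abs_of_nonneg h0]
        · rw [hεdef]; simp only [if_neg h0]
          rw [abs_of_neg (lt_of_not_ge h0)]; ring
      rw [hστ, mul_right_comm, hεc]
    have hfz : f (fun i => ε i * y (σ i)) < u := hfu _ (subset_convexHull ℝ Orb hz)
    rw [hL, hR] at habel
    rw [h2] at habel
    linarith
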